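/- At β = 0 one has the explicit formulas T₁(0,A₁) = 2√(2/a)·K(√((A₁+1)/2)) for A₁ ∈ (0,1) and T₂(0,A₁) = π/√(a·A₁) for A₁ ∈ (0,1); moreover, for each positive rational q there exists a unique value Â₁(0,q) ∈ (0,1) such that q·T₁(0,Â₁(0,q)) = T₂(0,Â₁(0,q)). -/

import Mathlib

open Real Filter Topology

/-- The complete elliptic integral of the first kind,
`K(κ) = ∫₀¹ dv / √((1 - v²)(1 - κ² v²))`. -/
noncomputable def K (κ : ℝ) : ℝ :=
  ∫ v in (0:ℝ)..1, 1 / Real.sqrt ((1 - v ^ 2) * (1 - κ ^ 2 * v ^ 2))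

/-- The modulus `κ₁(β, A₁)`, defined by
`κ₁² = (A₁(1-β) + √(1-4βA₁²)) / (2√(1-4βA₁²))`. -/
noncomputable def κ₁ (β A₁ : ℝ) : ℝ :=
  Real.sqrt ((A₁ * (1 - β) + Real.sqrt (1 - 4 * β * A₁ ^ 2)) /
    (2 * Real.sqrt (1 - 4 * β * A₁ ^ 2)))

/-- The modulus `κ₂(β)`, defined by `κ₂² = β/(1+β)`. -/
noncomputable def κ₂ (β : ℝ) : ℝ := Real.sqrt (β / (1 + β))

/-- The period `T₁(β,A₁) = 2√(2/a) (1-4βA₁²)^{-1/4} K(κ₁(β,A₁))` of the ξ-motion. -/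
noncomputable def T₁ (a β A₁ : ℝ) : ℝ :=
  2 * Real.sqrt (2 / a) / (1 - 4 * β * A₁ ^ 2) ^ ((1:ℝ)/4) * K (κ₁ β A₁)

/-- The period `T₂(β,A₁) = 2/√(a A₁ (1+β)) · K(κ₂(β))` of the φ-motion. -/
noncomputable def T₂ (a β A₁ : ℝ) : ℝ :=
  2 / Real.sqrt (a * A₁ * (1 + β)) * K (κ₂ β)

open MeasureTheory Set

noncomputable def ellInt (κ v : ℝ) : ℝ :=
  1 / Real.sqrt ((1 - v ^ 2) * (1 - κ ^ 2 * v ^ 2))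

lemma ellInt_nonneg (κ v : ℝ) : 0 ≤ ellInt κ v := by
  unfold ellInt; positivity

lemma K_eq_set (κ : ℝ) : K κ = ∫ v in Ioo (0:ℝ) 1, ellInt κ v := by
  rw [K, intervalIntegral.integral_of_le zero_le_one,
    MeasureTheory.integral_Ioc_eq_integral_Ioo]
  rfl

lemma denom_pos {κ v : ℝ} (h1 : κ ^ 2 < 1) (hv : v ∈ Ioo (0:ℝ) 1) :
    0 < (1 - v ^ 2) * (1 - κ ^ 2 * v ^ 2) := by
  obtain ⟨h0, hlt⟩ := hv
  have hκ : 0 ≤ κ ^ 2 := sq_nonneg κ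
  have hv2 : v ^ 2 < 1 := by nlinarith
  have h2 : κ ^ 2 * v ^ 2 ≤ κ ^ 2 :=
    by nlinarith [mul_nonneg hκ (by linarith : (0:ℝ) ≤ 1 - v ^ 2)]
  exact mul_pos (by linarith) (by linarith)

lemma integrable_rpow_half :
    IntegrableOn (fun v : ℝ => (1 - v) ^ (-(1/2) : ℝ)) (Ioo 0 1) := by
  have h : IntervalIntegrable (fun x : ℝ => x ^ (-(1/2) : ℝ)) volume 0 1 :=
    intervalIntegral.intervalIntegrable_rpow' (by norm_num)
  have h2 := (h.comp_sub_left 1).symm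
  simp only [sub_zero, sub_self] at h2
  rwa [intervalIntegrable_iff_integrableOn_Ioo_of_le zero_le_one] at h2

lemma ellInt_meas (κ : ℝ) : Measurable (ellInt κ) := by
  unfold ellInt
  fun_prop

lemma integrable_ellInt {κ : ℝ} (h1 : κ ^ 2 < 1) : IntegrableOn (ellInt κ) (Ioo 0 1) := by
  have hb := integrable_rpow_half.const_mul (1 / Real.sqrt (1 - κ ^ 2))
  refine Integrable.mono' hb ((ellInt_meas κ).aestronglyMeasurable) ?_
  refine (ae_restrict_iff' measurableSet_Ioo).2 (ae_of_all _ fun v hv => ?_)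
  obtain ⟨h0, hlt⟩ := hv
  rw [Real.norm_of_nonneg (ellInt_nonneg κ v)]
  have hr : (1 - v) ^ (-(1/2) : ℝ) = 1 / Real.sqrt (1 - v) := by
    rw [Real.rpow_neg (by linarith), Real.sqrt_eq_rpow]
    norm_num
  rw [hr]
  have hκ : 0 ≤ κ ^ 2 := sq_nonneg κ
  have hv2 : v ^ 2 < 1 := by nlinarith
  have hk2 : κ ^ 2 * v ^ 2 ≤ κ ^ 2 :=
    by nlinarith [mul_nonneg hκ (by linarith : (0:ℝ) ≤ 1 - v ^ 2)]
  have hd : 0 < (1 - κ ^ 2) * (1 - v) := mul_pos (by linarith) (by linarith)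
  have e1 : 1 - v ≤ 1 - v ^ 2 := by nlinarith
  have e2 : 1 - κ ^ 2 ≤ 1 - κ ^ 2 * v ^ 2 := by linarith
  have hle : (1 - κ ^ 2) * (1 - v) ≤ (1 - v ^ 2) * (1 - κ ^ 2 * v ^ 2) := by
    calc (1 - κ ^ 2) * (1 - v) ≤ (1 - κ ^ 2 * v ^ 2) * (1 - v ^ 2) :=
          mul_le_mul e2 e1 (by linarith) (by linarith)
      _ = (1 - v ^ 2) * (1 - κ ^ 2 * v ^ 2) := mul_comm _ _
  have : Real.sqrt ((1 - κ ^ 2) * (1 - v)) ≤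
      Real.sqrt ((1 - v ^ 2) * (1 - κ ^ 2 * v ^ 2)) := Real.sqrt_le_sqrt hle
  have h2 : 1 / Real.sqrt ((1 - v ^ 2) * (1 - κ ^ 2 * v ^ 2)) ≤
      1 / Real.sqrt ((1 - κ ^ 2) * (1 - v)) :=
    one_div_le_one_div_of_le (Real.sqrt_pos.2 hd) this
  calc ellInt κ v ≤ 1 / Real.sqrt ((1 - κ ^ 2) * (1 - v)) := h2
    _ = 1 / Real.sqrt (1 - κ ^ 2) * (1 / Real.sqrt (1 - v)) := by
        rw [Real.sqrt_mul (by nlinarith)]; ring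
lemma ellInt_le_ellInt {κ κ' v : ℝ} (h : κ ^ 2 ≤ κ' ^ 2) (h1 : κ' ^ 2 < 1)
    (hv : v ∈ Ioo (0:ℝ) 1) : ellInt κ v ≤ ellInt κ' v := by
  obtain ⟨h0, hlt⟩ := hv
  have hd' : 0 < (1 - v ^ 2) * (1 - κ' ^ 2 * v ^ 2) := denom_pos h1 ⟨h0, hlt⟩
  have hdl : (1 - v ^ 2) * (1 - κ' ^ 2 * v ^ 2) ≤ (1 - v ^ 2) * (1 - κ ^ 2 * v ^ 2) := by
    have : κ ^ 2 * v ^ 2 ≤ κ' ^ 2 * v ^ 2 :=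
      mul_le_mul_of_nonneg_right h (sq_nonneg v)
    nlinarith [mul_nonneg (by nlinarith : (0:ℝ) ≤ 1 - v ^ 2) (sub_nonneg.2 this)]
  exact one_div_le_one_div_of_le (Real.sqrt_pos.2 hd') (Real.sqrt_le_sqrt hdl)

lemma ellInt_lt_ellInt {κ κ' v : ℝ} (h : κ ^ 2 < κ' ^ 2) (h1 : κ' ^ 2 < 1)
    (hv : v ∈ Ioo (0:ℝ) 1) : ellInt κ v < ellInt κ' v := by
  obtain ⟨h0, hlt⟩ := hv
  have hd' : 0 < (1 - v ^ 2) * (1 - κ' ^ 2 * v ^ 2) := denom_pos h1 ⟨h0, hlt⟩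
  have hdl : (1 - v ^ 2) * (1 - κ' ^ 2 * v ^ 2) < (1 - v ^ 2) * (1 - κ ^ 2 * v ^ 2) := by
    have : κ ^ 2 * v ^ 2 < κ' ^ 2 * v ^ 2 :=
      mul_lt_mul_of_pos_right h (by positivity)
    nlinarith [mul_pos (by nlinarith : (0:ℝ) < 1 - v ^ 2) (sub_pos.2 this)]
  exact one_div_lt_one_div_of_lt (Real.sqrt_pos.2 hd')
    (Real.sqrt_lt_sqrt hd'.le hdl)

lemma K_lt_K {κ κ' : ℝ} (h0 : 0 ≤ κ) (h : κ < κ') (h1 : κ' < 1) : K κ < K κ' := by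
  have hsq : κ ^ 2 < κ' ^ 2 := by nlinarith
  have hsq1 : κ' ^ 2 < 1 := by nlinarith
  have hi := integrable_ellInt (lt_trans hsq hsq1)
  have hi' := integrable_ellInt hsq1
  rw [K_eq_set, K_eq_set, ← sub_pos, ← MeasureTheory.integral_sub hi' hi]
  refine (MeasureTheory.setIntegral_pos_iff_support_of_nonneg_ae ?_ (hi'.sub hi)).2 ?_
  · refine (ae_restrict_iff' measurableSet_Ioo).2 (ae_of_all _ fun v hv => ?_)
    exact sub_nonneg.2 (ellInt_lt_ellInt hsq hsq1 hv).le
  · refine lt_of_lt_of_le ?_ (measure_mono (Set.subset_inter (fun v hv => ?_) subset_rfl))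
    · simp [Real.volume_Ioo]
    · exact Function.mem_support.2 (sub_pos.2 (ellInt_lt_ellInt hsq hsq1 hv)).ne'

lemma K_le_K {κ κ' : ℝ} (h0 : 0 ≤ κ) (h : κ ≤ κ') (h1 : κ' < 1) : K κ ≤ K κ' := by
  rcases eq_or_lt_of_le h with rfl | hlt
  · exact le_rfl
  · exact (K_lt_K h0 hlt h1).le

lemma K_zero : K 0 = π / 2 := by
  have hint : IntervalIntegrable (ellInt 0) volume 0 1 := by
    rw [intervalIntegrable_iff_integrableOn_Ioo_of_le zero_le_one]
    exact integrable_ellInt (by norm_num)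
  have : K 0 = Real.arcsin 1 - Real.arcsin 0 := by
    rw [K]
    exact intervalIntegral.integral_eq_sub_of_hasDeriv_right_of_le zero_le_one
      (Real.continuous_arcsin.continuousOn)
      (fun x hx => by
        have h := Real.hasDerivAt_arcsin (by linarith [hx.1] : x ≠ -1)
          (by linarith [hx.2] : x ≠ 1)
        have he : 1 / Real.sqrt (1 - x ^ 2)
            = 1 / Real.sqrt ((1 - x ^ 2) * (1 - 0 ^ 2 * x ^ 2)) := by ring_nf
        rw [he] at h
        exact h.hasDerivWithinAt)
      hint
  rw [this, Real.arcsin_one, Real.arcsin_zero, sub_zero]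

lemma K_pos {κ : ℝ} (h0 : 0 ≤ κ) (h1 : κ < 1) : 0 < K κ :=
  lt_of_lt_of_le (by rw [K_zero]; positivity) (K_le_K le_rfl h0 h1)
lemma K_lower {κ : ℝ} (h0 : 0 < κ) (h1 : κ < 1) : -Real.log (1 - κ) / 2 ≤ K κ := by
  have hκ1 : 0 < 1 - κ := by linarith
  set h : ℝ → ℝ := fun v => 1 / (2 * (1 - κ * v)) with hh
  have hden : ∀ v ∈ Icc (0:ℝ) 1, 0 < 1 - κ * v := by
    intro v hv
    nlinarith [hv.1, hv.2]
  have hcont : ContinuousOn h (Icc 0 1) := by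
    refine continuousOn_const.div (by fun_prop) fun v hv => ?_
    have := hden v hv
    positivity
  have hint : IntegrableOn h (Ioo 0 1) :=
    (hcont.integrableOn_Icc).mono_set Ioo_subset_Icc_self
  -- step 1 : pointwise bound
  have hmono : ∫ v in Ioo (0:ℝ) 1, h v ≤ ∫ v in Ioo (0:ℝ) 1, ellInt κ v := by
    refine MeasureTheory.setIntegral_mono_on hint
      (integrable_ellInt (by nlinarith)) measurableSet_Ioo fun v hv => ?_
    obtain ⟨hv0, hv1⟩ := hv
    have hκv : 0 < 1 - κ * v := hden v ⟨hv0.le, hv1.le⟩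
    have hdp : 0 < (1 - v ^ 2) * (1 - κ ^ 2 * v ^ 2) :=
      denom_pos (by nlinarith) ⟨hv0, hv1⟩
    have e1 : 1 - v ^ 2 ≤ 2 * (1 - κ * v) := by nlinarith
    have e2 : 1 - κ ^ 2 * v ^ 2 ≤ 2 * (1 - κ * v) := by nlinarith
    have hc : (0:ℝ) < 1 - κ ^ 2 * v ^ 2 := by
      nlinarith [mul_pos hκv (show (0:ℝ) < 1 + κ * v by nlinarith)]
    have hsq : (1 - v ^ 2) * (1 - κ ^ 2 * v ^ 2) ≤ (2 * (1 - κ * v)) ^ 2 := by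
      nlinarith [mul_le_mul e1 e2 hc.le (by positivity : (0:ℝ) ≤ 2 * (1 - κ * v))]
    have hs : Real.sqrt ((1 - v ^ 2) * (1 - κ ^ 2 * v ^ 2)) ≤ 2 * (1 - κ * v) := by
      calc Real.sqrt ((1 - v ^ 2) * (1 - κ ^ 2 * v ^ 2))
          ≤ Real.sqrt ((2 * (1 - κ * v)) ^ 2) := Real.sqrt_le_sqrt hsq
        _ = 2 * (1 - κ * v) := Real.sqrt_sq (by positivity)
    exact one_div_le_one_div_of_le (Real.sqrt_pos.2 hdp) hs
  -- step 2 : compute ∫ h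
  have hval : ∫ v in Ioo (0:ℝ) 1, h v = -Real.log (1 - κ) / (2 * κ) := by
    rw [← MeasureTheory.integral_Ioc_eq_integral_Ioo,
      ← intervalIntegral.integral_of_le zero_le_one]
    have : ∀ v ∈ uIcc (0:ℝ) 1,
        HasDerivAt (fun v => -Real.log (1 - κ * v) / (2 * κ)) (h v) v := by
      intro v hv
      rw [uIcc_of_le zero_le_one] at hv
      have hκv : 0 < 1 - κ * v := hden v hv
      have d1 : HasDerivAt (fun v : ℝ => 1 - κ * v) (-κ) v := by
        simpa using ((hasDerivAt_id v).const_mul κ).const_sub 1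
      have d2 := (d1.log hκv.ne').neg.div_const (2 * κ)
      convert d2 using 1
      all_goals try rfl
      rw [hh]
      field_simp
    rw [intervalIntegral.integral_eq_sub_of_hasDerivAt this
      ((hcont.mono (by rw [uIcc_of_le zero_le_one])).intervalIntegrable)]
    simp [Real.log_one]
  rw [K_eq_set]
  have hlog : 0 ≤ -Real.log (1 - κ) := by
    have := Real.log_nonpos hκ1.le (by linarith)
    linarith
  calc -Real.log (1 - κ) / 2 ≤ -Real.log (1 - κ) / (2 * κ) := by
        apply div_le_div_of_nonneg_left hlog (by linarith) (by linarith)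
    _ ≤ _ := hval ▸ hmono
lemma K_continuousAt {κ₀ : ℝ} (h0 : 0 ≤ κ₀) (h1 : κ₀ < 1) : ContinuousAt K κ₀ := by
  have hK : K = fun κ => ∫ v in Ioo (0:ℝ) 1, ellInt κ v := funext K_eq_set
  rw [hK]
  set c : ℝ := (κ₀ + 1) / 2 with hc
  have hc0 : κ₀ < c := by rw [hc]; linarith
  have hc1 : c < 1 := by rw [hc]; linarith
  have hcpos : 0 < c := by rw [hc]; linarith
  refine MeasureTheory.continuousAt_of_dominated (bound := ellInt c)
    (Eventually.of_forall fun κ => ((ellInt_meas κ).aestronglyMeasurable)) ?_ ?_ ?_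
  · filter_upwards [Ioo_mem_nhds (by linarith : -c < κ₀) hc0] with κ hκ
    refine (ae_restrict_iff' measurableSet_Ioo).2 (ae_of_all _ fun v hv => ?_)
    rw [Real.norm_of_nonneg (ellInt_nonneg κ v)]
    exact ellInt_le_ellInt (by nlinarith [hκ.1, hκ.2]) (by nlinarith) hv
  · exact integrable_ellInt (by nlinarith)
  · refine (ae_restrict_iff' measurableSet_Ioo).2 (ae_of_all _ fun v hv => ?_)
    have hd : 0 < (1 - v ^ 2) * (1 - κ₀ ^ 2 * v ^ 2) := denom_pos (by nlinarith) hv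
    have hs : Real.sqrt ((1 - v ^ 2) * (1 - κ₀ ^ 2 * v ^ 2)) ≠ 0 :=
      (Real.sqrt_pos.2 hd).ne'
    have hcont : ContinuousAt
        (fun κ : ℝ => Real.sqrt ((1 - v ^ 2) * (1 - κ ^ 2 * v ^ 2))) κ₀ := by
      fun_prop
    exact continuousAt_const.div hcont hs
noncomputable def Ffun (A : ℝ) : ℝ := Real.sqrt A * K (Real.sqrt ((A + 1) / 2))

lemma kap_lt_one {A : ℝ} (hA0 : -1 ≤ A) (hA1 : A < 1) : Real.sqrt ((A + 1) / 2) < 1 := by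
  calc Real.sqrt ((A + 1) / 2) < Real.sqrt 1 := Real.sqrt_lt_sqrt (by linarith) (by linarith)
    _ = 1 := Real.sqrt_one

lemma Ffun_strictMono : StrictMonoOn Ffun (Ioo 0 1) := by
  intro x hx y hy hxy
  have hκx1 : Real.sqrt ((x + 1) / 2) < 1 := kap_lt_one (by linarith [hx.1]) hx.2
  have hκy1 : Real.sqrt ((y + 1) / 2) < 1 := kap_lt_one (by linarith [hy.1]) hy.2
  have hκlt : Real.sqrt ((x + 1) / 2) < Real.sqrt ((y + 1) / 2) :=
    Real.sqrt_lt_sqrt (by linarith [hx.1]) (by linarith)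
  have hKx : 0 < K (Real.sqrt ((x + 1) / 2)) := K_pos (Real.sqrt_nonneg _) hκx1
  have hK : K (Real.sqrt ((x + 1) / 2)) < K (Real.sqrt ((y + 1) / 2)) :=
    K_lt_K (Real.sqrt_nonneg _) hκlt hκy1
  have hs : Real.sqrt x < Real.sqrt y := Real.sqrt_lt_sqrt hx.1.le hxy
  have hsy : 0 < Real.sqrt y := Real.sqrt_pos.2 (hx.1.trans hxy)
  calc Ffun x = Real.sqrt x * K (Real.sqrt ((x + 1) / 2)) := rfl
    _ < Real.sqrt y * K (Real.sqrt ((x + 1) / 2)) := by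
        exact mul_lt_mul_of_pos_right hs hKx
    _ < Real.sqrt y * K (Real.sqrt ((y + 1) / 2)) := by
        exact mul_lt_mul_of_pos_left hK hsy
    _ = Ffun y := rfl

lemma Ffun_continuousOn : ContinuousOn Ffun (Ioo 0 1) := by
  intro A hA
  have h1 : ContinuousAt (fun A : ℝ => Real.sqrt ((A + 1) / 2)) A := by fun_prop
  have h2 : ContinuousAt K (Real.sqrt ((A + 1) / 2)) :=
    K_continuousAt (Real.sqrt_nonneg _) (kap_lt_one (by linarith [hA.1]) hA.2)
  have h3 : ContinuousAt (fun A : ℝ => K (Real.sqrt ((A + 1) / 2))) A :=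
    ContinuousAt.comp (f := fun A : ℝ => Real.sqrt ((A + 1) / 2)) h2 h1
  exact ((Real.continuous_sqrt.continuousAt).mul h3).continuousWithinAt

lemma exists_small {c : ℝ} (hc : 0 < c) :
    ∃ u ∈ Ioo (0:ℝ) 1, u ≤ 1 / 2 ∧ Ffun u < c := by
  set M := K (Real.sqrt (3 / 4)) with hM
  have hM0 : 0 < M := K_pos (Real.sqrt_nonneg _)
    (by calc Real.sqrt (3/4) < Real.sqrt 1 := Real.sqrt_lt_sqrt (by norm_num) (by norm_num)
          _ = 1 := Real.sqrt_one)
  set u : ℝ := min (1 / 2) ((c / (2 * M)) ^ 2) with hu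
  have hu0 : 0 < u := lt_min (by norm_num) (by positivity)
  have hu1 : u ≤ 1 / 2 := min_le_left _ _
  refine ⟨u, ⟨hu0, by linarith⟩, hu1, ?_⟩
  have hκ1 : Real.sqrt ((u + 1) / 2) < 1 := kap_lt_one (by linarith) (by linarith)
  have hK : K (Real.sqrt ((u + 1) / 2)) ≤ M := by
    refine K_le_K (Real.sqrt_nonneg _) (Real.sqrt_le_sqrt (by linarith))
      (by calc Real.sqrt (3/4) < Real.sqrt 1 := Real.sqrt_lt_sqrt (by norm_num) (by norm_num)
            _ = 1 := Real.sqrt_one)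
  have hKpos : 0 < K (Real.sqrt ((u + 1) / 2)) := K_pos (Real.sqrt_nonneg _) hκ1
  have hsu : Real.sqrt u ≤ c / (2 * M) := by
    calc Real.sqrt u ≤ Real.sqrt ((c / (2 * M)) ^ 2) :=
          Real.sqrt_le_sqrt (min_le_right _ _)
      _ = c / (2 * M) := Real.sqrt_sq (by positivity)
  calc Ffun u ≤ (c / (2 * M)) * M :=
        mul_le_mul hsu hK hKpos.le (by positivity)
    _ = c / 2 := by field_simp
    _ < c := by linarith

lemma exists_large {c : ℝ} (hc : 0 < c) :
    ∃ v ∈ Ioo (0:ℝ) 1, 3 / 4 ≤ v ∧ c < Ffun v := by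
  set v : ℝ := max (3 / 4) (1 - Real.exp (-(2 * Real.sqrt 2 * c))) with hv
  have hexp : 0 < Real.exp (-(2 * Real.sqrt 2 * c)) := Real.exp_pos _
  have hv1 : v < 1 := max_lt (by norm_num) (by linarith)
  have hv34 : 3 / 4 ≤ v := le_max_left _ _
  have hv2 : 1 - Real.exp (-(2 * Real.sqrt 2 * c)) ≤ v := le_max_right _ _
  have hv0 : 0 < v := by linarith
  set κ := Real.sqrt ((v + 1) / 2) with hκ
  have ht0 : (0:ℝ) < (v + 1) / 2 := by linarith
  have ht1 : (v + 1) / 2 ≤ 1 := by linarith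
  have hκpos : 0 < κ := Real.sqrt_pos.2 ht0
  have hκlt : κ < 1 := kap_lt_one (by linarith) hv1
  have hκge : (v + 1) / 2 ≤ κ := by
    rw [hκ, Real.le_sqrt ht0.le (by linarith)]
    nlinarith
  have h1κ : 1 - κ ≤ (1 - v) / 2 := by linarith
  have h1κ0 : 0 < 1 - κ := by linarith
  have hKlow : -Real.log (1 - κ) / 2 ≤ K κ := K_lower hκpos hκlt
  have hlogv : Real.log ((1 - v) / 2) < -(2 * Real.sqrt 2 * c) := by
    rw [Real.log_lt_iff_lt_exp (by linarith)]
    linarith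
  have hlog : Real.log (1 - κ) ≤ Real.log ((1 - v) / 2) :=
    Real.log_le_log h1κ0 h1κ
  have hK : Real.sqrt 2 * c < K κ := by
    have h2 : 2 * Real.sqrt 2 * c < -Real.log (1 - κ) := by linarith
    linarith
  have hs2 : (0:ℝ) < Real.sqrt 2 := by positivity
  have hsv : (Real.sqrt 2)⁻¹ ≤ Real.sqrt v := by
    calc (Real.sqrt 2)⁻¹ = Real.sqrt 2⁻¹ := (Real.sqrt_inv 2).symm
      _ ≤ Real.sqrt v := Real.sqrt_le_sqrt (by norm_num; linarith)
  refine ⟨v, ⟨hv0, hv1⟩, hv34, ?_⟩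
  have hKnn : 0 ≤ K κ := (K_pos (Real.sqrt_nonneg _) hκlt).le
  calc c = (Real.sqrt 2)⁻¹ * (Real.sqrt 2 * c) := by
        rw [← mul_assoc, inv_mul_cancel₀ hs2.ne', one_mul]
    _ < (Real.sqrt 2)⁻¹ * K κ := by
        exact mul_lt_mul_of_pos_left hK (by positivity)
    _ ≤ Real.sqrt v * K κ := mul_le_mul_of_nonneg_right hsv hKnn
    _ = Ffun v := rfl

/-- At `β = 0`: `T₁(0,A₁) = 2√(2/a) K(√((A₁+1)/2))`, `T₂(0,A₁) = π/√(aA₁)` for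
`A₁ ∈ (0,1)`, and for each positive rational `q` there is a unique
`Â₁(0,q) ∈ (0,1)` with `q T₁(0,Â₁(0,q)) = T₂(0,Â₁(0,q))`. -/
theorem beta_zero_formulas (a : ℝ) (ha : 0 < a) :
    (∀ A₁ ∈ Set.Ioo (0:ℝ) 1,
      T₁ a 0 A₁ = 2 * Real.sqrt (2 / a) * K (Real.sqrt ((A₁ + 1) / 2))) ∧
    (∀ A₁ ∈ Set.Ioo (0:ℝ) 1, T₂ a 0 A₁ = Real.pi / Real.sqrt (a * A₁)) ∧
    (∀ q : ℚ, 0 < q →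
      ∃! A₁ : ℝ, A₁ ∈ Set.Ioo (0:ℝ) 1 ∧ (q : ℝ) * T₁ a 0 A₁ = T₂ a 0 A₁) := by
  have hT1 : ∀ A : ℝ, T₁ a 0 A = 2 * Real.sqrt (2 / a) * K (Real.sqrt ((A + 1) / 2)) := by
    intro A
    have h1 : (1 : ℝ) - 4 * 0 * A ^ 2 = 1 := by ring
    rw [T₁, κ₁, h1, Real.sqrt_one, Real.one_rpow, div_one]
    norm_num
  have hT2 : ∀ A : ℝ, 0 < A → T₂ a 0 A = Real.pi / Real.sqrt (a * A) := by
    intro A hA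
    have h1 : κ₂ 0 = 0 := by simp [κ₂]
    rw [T₂, h1, K_zero]
    rw [show a * A * (1 + 0) = a * A by ring]
    ring
  refine ⟨fun A hA => hT1 A, fun A hA => hT2 A hA.1, fun q hq => ?_⟩
  have hq' : (0:ℝ) < (q:ℝ) := by exact_mod_cast hq
  set c : ℝ := π / (2 * Real.sqrt 2 * q) with hc
  have hc0 : 0 < c := by positivity
  have key : ∀ A ∈ Ioo (0:ℝ) 1, ((q:ℝ) * T₁ a 0 A = T₂ a 0 A ↔ Ffun A = c) := by
    intro A hA
    rw [hT1 A, hT2 A hA.1]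
    have haA : 0 < Real.sqrt (a * A) := Real.sqrt_pos.2 (mul_pos ha hA.1)
    rw [eq_div_iff haA.ne']
    rw [show Ffun A = Real.sqrt A * K (Real.sqrt ((A + 1) / 2)) from rfl, hc,
      eq_div_iff (by positivity : (0:ℝ) < 2 * Real.sqrt 2 * (q:ℝ)).ne']
    have h2 : Real.sqrt (2 / a) * Real.sqrt (a * A) = Real.sqrt 2 * Real.sqrt A := by
      rw [← Real.sqrt_mul (by positivity : (0:ℝ) ≤ 2 / a),
        ← Real.sqrt_mul (by norm_num : (0:ℝ) ≤ 2)]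
      congr 1
      field_simp
    have heq : (q:ℝ) * (2 * Real.sqrt (2 / a) * K (Real.sqrt ((A + 1) / 2))) *
        Real.sqrt (a * A) =
        Real.sqrt A * K (Real.sqrt ((A + 1) / 2)) * (2 * Real.sqrt 2 * (q:ℝ)) := by
      linear_combination ((q:ℝ) * 2 * K (Real.sqrt ((A + 1) / 2))) * h2
    rw [heq]
  obtain ⟨u, hu, hu2, hFu⟩ := exists_small hc0
  obtain ⟨v, hv, hv2, hFv⟩ := exists_large hc0
  have huv : u ≤ v := by linarith
  have hsub : Icc u v ⊆ Ioo (0:ℝ) 1 := fun x hx =>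
    ⟨lt_of_lt_of_le hu.1 hx.1, lt_of_le_of_lt hx.2 hv.2⟩
  obtain ⟨A, hAuv, hFA⟩ :=
    intermediate_value_Ioo huv (Ffun_continuousOn.mono hsub) ⟨hFu, hFv⟩
  have hA : A ∈ Ioo (0:ℝ) 1 := ⟨hu.1.trans hAuv.1, hAuv.2.trans hv.2⟩
  refine ⟨A, ⟨hA, (key A hA).2 hFA⟩, ?_⟩
  rintro B ⟨hB, hBeq⟩
  exact Ffun_strictMono.injOn hB hA (by rw [(key B hB).1 hBeq, hFA])
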